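/- Let g: [0,δ] → ℝ be continuous with g(0) > 0, let d ≥ 1, n ≥ 2 be integers, c > 0, and E(R) = c·Rⁿ·(1 + η(R)) with η continuous, η(0)=0. Then lim_{T→∞} T^{d/n} ∫₀^δ R^{d−1} g(R) e^{−T·E(R)} dR = g(0)·c^{−d/n}·(1/n)·Γ(d/n). -/

import Mathlib

open Filter Topology

theorem stmt_4 (g η E : ℝ → ℝ) (δ c : ℝ) (d n : ℕ)
    (hδ : 0 < δ) (hc : 0 < c) (hd : 1 ≤ d) (hn : 2 ≤ n)
    (hg : ContinuousOn g (Set.Icc 0 δ)) (hg0 : 0 < g 0)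
    (hη : ContinuousOn η (Set.Icc 0 δ)) (hη0 : η 0 = 0)
    (hE : ∀ R ∈ Set.Icc (0:ℝ) δ, E R = c * R ^ n * (1 + η R))
    (hEpos : ∀ R ∈ Set.Ioc (0:ℝ) δ, 0 < E R) :
    Tendsto (fun T : ℝ =>
        T ^ ((d : ℝ) / (n : ℝ)) * ∫ R in (0:ℝ)..δ, R ^ (d - 1) * g R * Real.exp (-T * E R))
      atTop
      (𝓝 (g 0 * c ^ (-((d : ℝ) / (n : ℝ))) * (1 / (n : ℝ)) *
        Real.Gamma ((d : ℝ) / (n : ℝ)))) := by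
  have hn0 : 0 < n := by omega
  have hnR : (0:ℝ) < (n:ℝ) := by exact_mod_cast hn0
  have hdR : (1:ℝ) ≤ (d:ℝ) := by exact_mod_cast hd
  have hcast : ((d - 1 : ℕ) : ℝ) = (d:ℝ) - 1 := by
    rw [Nat.cast_sub hd, Nat.cast_one]
  set p : ℝ := (d:ℝ)/(n:ℝ) with hpdef
  -- uniform lower bound for 1 + η
  have hcont1 : ContinuousOn (fun x : ℝ => 1 + η x) (Set.Icc 0 δ) :=
    continuousOn_const.add hη
  obtain ⟨x₀, hx₀, hmin⟩ := isCompact_Icc.exists_isMinOn (Set.nonempty_Icc.mpr hδ.le) hcont1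
  set ε₀ : ℝ := 1 + η x₀ with hε₀def
  have hε₀pos : 0 < ε₀ := by
    rw [hε₀def]
    rcases eq_or_lt_of_le hx₀.1 with h0 | h0
    · simp [← h0, hη0]
    · have hE1 := hEpos x₀ ⟨h0, hx₀.2⟩
      rw [hE x₀ hx₀] at hE1
      nlinarith [mul_pos hc (pow_pos h0 n)]
  have hε₀le : ∀ R ∈ Set.Icc (0:ℝ) δ, ε₀ ≤ 1 + η R := fun R hR => hmin hR
  -- uniform bound for |g|
  obtain ⟨M0, hM0⟩ := isCompact_Icc.exists_bound_of_continuousOn hg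
  set M : ℝ := max M0 0 with hMdef
  have hM : ∀ R ∈ Set.Icc (0:ℝ) δ, |g R| ≤ M := by
    intro R hR
    have := hM0 R hR
    rw [Real.norm_eq_abs] at this
    exact this.trans (le_max_left _ _)
  have hMnn : 0 ≤ M := le_max_right _ _
  set s : ℝ → ℝ := fun T => T ^ (-(1:ℝ)/(n:ℝ)) with hsdef
  set b : ℝ → ℝ := fun T => δ * T ^ ((1:ℝ)/(n:ℝ)) with hbdef
  set ψ : ℝ → ℝ → ℝ := fun T x =>
    x ^ (d-1) * g (s T * x) * Real.exp (-(c * x ^ n * (1 + η (s T * x)))) with hψdef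
  set F : ℝ → ℝ → ℝ := fun T => (Set.Ioc 0 (b T)).indicator (ψ T) with hFdef
  set f : ℝ → ℝ := fun x => x ^ (d-1) * g 0 * Real.exp (-(c * x ^ n)) with hfdef
  have hspos : ∀ T : ℝ, 0 < T → 0 < s T := by
    intro T hT
    simp only [hsdef]
    exact Real.rpow_pos_of_pos hT _
  have hbnn : ∀ T : ℝ, 0 < T → 0 ≤ b T := by
    intro T hT
    simp only [hbdef]
    exact mul_nonneg hδ.le (Real.rpow_pos_of_pos hT _).le
  have hsb : ∀ T : ℝ, 0 < T → s T * b T = δ := by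
    intro T hT
    have h1 : s T * T ^ ((1:ℝ)/(n:ℝ)) = 1 := by
      simp only [hsdef]
      rw [← Real.rpow_add hT]
      rw [show -(1:ℝ)/(n:ℝ) + (1:ℝ)/(n:ℝ) = 0 by ring, Real.rpow_zero]
    simp only [hbdef]
    calc s T * (δ * T ^ ((1:ℝ)/(n:ℝ))) = δ * (s T * T ^ ((1:ℝ)/(n:ℝ))) := by ring
      _ = δ := by rw [h1, mul_one]
  have hsn : ∀ T : ℝ, 0 < T → s T ^ n = T⁻¹ := by
    intro T hT
    simp only [hsdef]
    rw [← Real.rpow_natCast (T ^ (-(1:ℝ)/(n:ℝ))) n, ← Real.rpow_mul hT.le]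
    rw [show (-(1:ℝ)/(n:ℝ)) * (n:ℝ) = -1 by field_simp]
    exact Real.rpow_neg_one T
  have hsd : ∀ T : ℝ, 0 < T → T ^ p * s T ^ d = 1 := by
    intro T hT
    simp only [hsdef]
    rw [← Real.rpow_natCast (T ^ (-(1:ℝ)/(n:ℝ))) d, ← Real.rpow_mul hT.le,
      ← Real.rpow_add hT]
    rw [show p + (-(1:ℝ)/(n:ℝ)) * (d:ℝ) = 0 by rw [hpdef]; field_simp; ring, Real.rpow_zero]
  -- the key change-of-variables identity
  have key : ∀ T : ℝ, 1 ≤ T →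
      T ^ p * (∫ R in (0:ℝ)..δ, R ^ (d - 1) * g R * Real.exp (-T * E R))
        = ∫ x in Set.Ioi (0:ℝ), F T x := by
    intro T hT1
    have hT0 : 0 < T := lt_of_lt_of_le one_pos hT1
    have hs0 : 0 < s T := hspos T hT0
    have e1 : (∫ R in (0:ℝ)..δ, R ^ (d-1) * g R * Real.exp (-T * E R))
        = ∫ R in (0:ℝ)..δ, R ^ (d-1) * g R * Real.exp (-(T * (c * R ^ n * (1 + η R)))) := by
      apply intervalIntegral.integral_congr
      intro R hR
      rw [Set.uIcc_of_le hδ.le] at hR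
      simp only [hE R hR, neg_mul]
    have e2 := intervalIntegral.integral_comp_mul_left
      (fun R => R ^ (d-1) * g R * Real.exp (-(T * (c * R ^ n * (1 + η R)))))
      (a := 0) (b := b T) hs0.ne'
    rw [mul_zero, hsb T hT0] at e2
    have e3 : (∫ R in (0:ℝ)..δ, R ^ (d-1) * g R * Real.exp (-(T * (c * R ^ n * (1 + η R)))))
        = s T • ∫ x in (0:ℝ)..(b T), (s T * x) ^ (d-1) * g (s T * x) *
            Real.exp (-(T * (c * (s T * x) ^ n * (1 + η (s T * x))))) := by
      rw [e2, smul_smul, mul_inv_cancel₀ hs0.ne', one_smul]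
    calc T ^ p * (∫ R in (0:ℝ)..δ, R ^ (d - 1) * g R * Real.exp (-T * E R))
        = ∫ x in (0:ℝ)..(b T), (T ^ p * s T) * ((s T * x) ^ (d-1) * g (s T * x) *
            Real.exp (-(T * (c * (s T * x) ^ n * (1 + η (s T * x)))))) := by
          rw [e1, e3, smul_eq_mul, ← mul_assoc, ← intervalIntegral.integral_const_mul]
      _ = ∫ x in (0:ℝ)..(b T), ψ T x := by
          apply intervalIntegral.integral_congr
          intro x _
          simp only [hψdef]
          have h1 : T * (c * (s T * x) ^ n * (1 + η (s T * x)))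
              = c * x ^ n * (1 + η (s T * x)) := by
            rw [mul_pow, hsn T hT0]
            field_simp
          rw [h1, mul_pow]
          have h4 : T ^ p * (s T * s T ^ (d-1)) = 1 := by
            rw [← pow_succ' (s T) (d-1), Nat.sub_add_cancel hd]
            exact hsd T hT0
          calc (T ^ p * s T) * (s T ^ (d-1) * x ^ (d-1) * g (s T * x) *
                Real.exp (-(c * x ^ n * (1 + η (s T * x)))))
              = (T ^ p * (s T * s T ^ (d-1))) * (x ^ (d-1) * g (s T * x) *
                Real.exp (-(c * x ^ n * (1 + η (s T * x))))) := by ring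
            _ = x ^ (d-1) * g (s T * x) * Real.exp (-(c * x ^ n * (1 + η (s T * x)))) := by
                rw [h4, one_mul]
      _ = ∫ x in Set.Ioi (0:ℝ), F T x := by
          rw [intervalIntegral.integral_of_le (hbnn T hT0)]
          simp only [hFdef]
          rw [MeasureTheory.integral_indicator measurableSet_Ioc]
          rw [MeasureTheory.Measure.restrict_restrict measurableSet_Ioc,
            Set.inter_eq_left.mpr Set.Ioc_subset_Ioi_self]
  -- dominated convergence
  have hbound_int : MeasureTheory.Integrable
      (fun x => M * (x ^ ((d:ℝ)-1) * Real.exp (-(c*ε₀) * x ^ (n:ℝ))))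
      (MeasureTheory.volume.restrict (Set.Ioi 0)) := by
    have h := integrableOn_rpow_mul_exp_neg_mul_rpow (p := (n:ℝ)) (s := (d:ℝ)-1)
      (b := c*ε₀) (by linarith) (by exact_mod_cast hn0) (by positivity)
    exact h.const_mul M
  have hmeas : ∀ᶠ T in atTop, MeasureTheory.AEStronglyMeasurable (F T)
      (MeasureTheory.volume.restrict (Set.Ioi 0)) := by
    filter_upwards [eventually_ge_atTop 1] with T hT1
    have hT0 : (0:ℝ) < T := lt_of_lt_of_le one_pos hT1
    have hmaps : Set.MapsTo (fun x => s T * x) (Set.Ioc 0 (b T)) (Set.Icc 0 δ) := by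
      intro x hx
      constructor
      · exact mul_nonneg (hspos T hT0).le hx.1.le
      · calc s T * x ≤ s T * b T := mul_le_mul_of_nonneg_left hx.2 (hspos T hT0).le
          _ = δ := hsb T hT0
    have hc1 : ContinuousOn (fun x => g (s T * x)) (Set.Ioc 0 (b T)) :=
      hg.comp ((continuous_const.mul continuous_id).continuousOn) hmaps
    have hc2 : ContinuousOn (fun x => η (s T * x)) (Set.Ioc 0 (b T)) :=
      hη.comp ((continuous_const.mul continuous_id).continuousOn) hmaps
    have hcont : ContinuousOn (ψ T) (Set.Ioc 0 (b T)) := by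
      simp only [hψdef]
      exact ((continuous_pow (d-1)).continuousOn.mul hc1).mul
        (Real.continuous_exp.comp_continuousOn
          (((continuous_const.mul (continuous_pow n)).continuousOn.mul
            (continuousOn_const.add hc2)).neg))
    simp only [hFdef]
    rw [aestronglyMeasurable_indicator_iff measurableSet_Ioc,
      MeasureTheory.Measure.restrict_restrict measurableSet_Ioc,
      Set.inter_eq_left.mpr Set.Ioc_subset_Ioi_self]
    exact hcont.aestronglyMeasurable measurableSet_Ioc
  have hbnd : ∀ᶠ T in atTop, ∀ᵐ x ∂(MeasureTheory.volume.restrict (Set.Ioi 0)),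
      ‖F T x‖ ≤ M * (x ^ ((d:ℝ)-1) * Real.exp (-(c*ε₀) * x ^ (n:ℝ))) := by
    filter_upwards [eventually_ge_atTop 1] with T hT1
    have hT0 : (0:ℝ) < T := lt_of_lt_of_le one_pos hT1
    rw [MeasureTheory.ae_restrict_iff' measurableSet_Ioi]
    refine Filter.Eventually.of_forall (fun x hx => ?_)
    have hx0 : (0:ℝ) < x := hx
    have hrw1 : x ^ ((d:ℝ)-1) = x ^ (d-1) := by
      rw [← hcast, Real.rpow_natCast]
    have hrw2 : x ^ ((n:ℝ)) = x ^ n := Real.rpow_natCast x n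
    by_cases hmem : x ∈ Set.Ioc 0 (b T)
    · have hy : s T * x ∈ Set.Icc 0 δ := by
        constructor
        · exact mul_nonneg (hspos T hT0).le hx0.le
        · calc s T * x ≤ s T * b T := mul_le_mul_of_nonneg_left hmem.2 (hspos T hT0).le
            _ = δ := hsb T hT0
      have hexp : Real.exp (-(c * x ^ n * (1 + η (s T * x))))
          ≤ Real.exp (-(c*ε₀) * x ^ n) := by
        apply Real.exp_le_exp.mpr
        have h1 := hε₀le _ hy
        nlinarith [mul_nonneg (mul_nonneg hc.le (pow_nonneg hx0.le n)) (sub_nonneg.mpr h1)]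
      simp only [hFdef, Set.indicator_of_mem hmem, hψdef]
      rw [Real.norm_eq_abs, abs_mul, abs_mul, abs_pow, abs_of_pos hx0, Real.abs_exp,
        hrw1, hrw2]
      calc x ^ (d-1) * |g (s T * x)| * Real.exp (-(c * x ^ n * (1 + η (s T * x))))
          ≤ x ^ (d-1) * M * Real.exp (-(c*ε₀) * x ^ n) := by
            apply mul_le_mul
            · exact mul_le_mul_of_nonneg_left (hM _ hy) (pow_nonneg hx0.le _)
            · exact hexp
            · exact (Real.exp_pos _).le
            · exact mul_nonneg (pow_nonneg hx0.le _) hMnn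
        _ = M * (x ^ (d-1) * Real.exp (-(c*ε₀) * x ^ n)) := by ring
    · simp only [hFdef, Set.indicator_of_notMem hmem, norm_zero]
      rw [hrw1, hrw2]
      exact mul_nonneg hMnn (mul_nonneg (pow_nonneg hx0.le _) (Real.exp_pos _).le)
  have hlim : ∀ᵐ x ∂(MeasureTheory.volume.restrict (Set.Ioi 0)),
      Tendsto (fun T => F T x) atTop (𝓝 (f x)) := by
    rw [MeasureTheory.ae_restrict_iff' measurableSet_Ioi]
    refine Filter.Eventually.of_forall (fun x hx => ?_)
    have hx0 : (0:ℝ) < x := hx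
    have hmem : ∀ᶠ T in atTop, x ∈ Set.Ioc 0 (b T) := by
      filter_upwards [eventually_ge_atTop (max 1 ((x/δ) ^ (n:ℝ)))] with T hT
      have hT1 : (1:ℝ) ≤ T := le_trans (le_max_left _ _) hT
      have hT0 : (0:ℝ) < T := lt_of_lt_of_le one_pos hT1
      refine ⟨hx0, ?_⟩
      have h1 : (x/δ) ^ ((n:ℝ)) ≤ T := le_trans (le_max_right _ _) hT
      have h2 : ((x/δ) ^ ((n:ℝ))) ^ ((1:ℝ)/(n:ℝ)) ≤ T ^ ((1:ℝ)/(n:ℝ)) :=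
        Real.rpow_le_rpow (Real.rpow_nonneg (by positivity) _) h1 (by positivity)
      rw [← Real.rpow_mul (by positivity : (0:ℝ) ≤ x/δ),
        show (n:ℝ) * ((1:ℝ)/(n:ℝ)) = 1 by field_simp, Real.rpow_one, div_le_iff₀ hδ] at h2
      simp only [hbdef]
      calc x ≤ T ^ ((1:ℝ)/(n:ℝ)) * δ := h2
        _ = δ * T ^ ((1:ℝ)/(n:ℝ)) := mul_comm _ _
    have hsx : Tendsto (fun T => s T * x) atTop (𝓝[Set.Icc 0 δ] 0) := by
      rw [tendsto_nhdsWithin_iff]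
      constructor
      · have h0 : Tendsto s atTop (𝓝 0) := by
          simp only [hsdef, neg_div]
          exact tendsto_rpow_neg_atTop (by positivity)
        simpa using h0.mul_const x
      · filter_upwards [hmem, eventually_ge_atTop 1] with T hTmem hT1
        have hT0 : (0:ℝ) < T := lt_of_lt_of_le one_pos hT1
        constructor
        · exact mul_nonneg (hspos T hT0).le hx0.le
        · calc s T * x ≤ s T * b T := mul_le_mul_of_nonneg_left hTmem.2 (hspos T hT0).le
            _ = δ := hsb T hT0
    have hgx : Tendsto (fun T => g (s T * x)) atTop (𝓝 (g 0)) :=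
      ((hg 0 (Set.left_mem_Icc.mpr hδ.le)).tendsto).comp hsx
    have hηx : Tendsto (fun T => η (s T * x)) atTop (𝓝 0) := by
      have h := ((hη 0 (Set.left_mem_Icc.mpr hδ.le)).tendsto).comp hsx
      rwa [hη0] at h
    have hψt : Tendsto (fun T => ψ T x) atTop (𝓝 (f x)) := by
      simp only [hψdef, hfdef]
      have hexp : Tendsto (fun T => Real.exp (-(c * x ^ n * (1 + η (s T * x))))) atTop
          (𝓝 (Real.exp (-(c * x ^ n)))) := by
        have h : Tendsto (fun T => -(c * x ^ n * (1 + η (s T * x)))) atTop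
            (𝓝 (-(c * x ^ n * (1 + 0)))) :=
          (tendsto_const_nhds.mul (tendsto_const_nhds.add hηx)).neg
        have h2 := (Real.continuous_exp.tendsto _).comp h
        simpa [Function.comp_def] using h2
      exact (tendsto_const_nhds.mul hgx).mul hexp
    refine hψt.congr' ?_
    filter_upwards [hmem] with T h
    simp only [hFdef, Set.indicator_of_mem h]
  have hint : (∫ x in Set.Ioi (0:ℝ), f x)
      = g 0 * c ^ (-((d:ℝ)/(n:ℝ))) * (1/(n:ℝ)) * Real.Gamma ((d:ℝ)/(n:ℝ)) := by
    have e : Set.EqOn f (fun x => g 0 * (x ^ ((d:ℝ)-1) * Real.exp (-c * x ^ ((n:ℝ)))))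
        (Set.Ioi (0:ℝ)) := by
      intro x _
      simp only [hfdef]
      rw [← hcast, Real.rpow_natCast, Real.rpow_natCast]
      ring
    rw [MeasureTheory.setIntegral_congr_fun measurableSet_Ioi e,
      MeasureTheory.integral_const_mul,
      integral_rpow_mul_exp_neg_mul_rpow hnR (by linarith) hc,
      sub_add_cancel, neg_div]
    ring
  have hDCT := MeasureTheory.tendsto_integral_filter_of_dominated_convergence
    (μ := MeasureTheory.volume.restrict (Set.Ioi 0))
    (F := F) (f := f) _ hmeas hbnd hbound_int hlim
  rw [hint] at hDCT
  refine hDCT.congr' ?_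
  filter_upwards [eventually_ge_atTop 1] with T hT
  exact (key T hT).symm
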